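/- For every j ∈ ℤ: (i) the second differences of the discrete convolution satisfy |A_{j+1} − 2·A_j + A_{j−1}| ≤ Δx²·(sup |μ''|)·m; (ii) the second differences of the slope corrections satisfy |s_{j+1} − 2·s_j + s_{j−1}| ≤ 2θ·Δx²·(sup |μ''|)·m; and (iii) consequently |A⁻_{j+3/2} − 2·A⁻_{j+1/2} + A⁻_{j−1/2}| ≤ (1 + θ)·Δx²·(sup |μ''|)·m. -/

import Mathlib

open MeasureTheory

noncomputable section

/-- minmod limiter of three arguments. -/
def minmod3 (a b c : ℝ) : ℝ :=
  if 0 < a ∧ 0 < b ∧ 0 < c then min a (min b c)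
  else if a < 0 ∧ b < 0 ∧ c < 0 then max a (max b c)
  else 0

/-- MUSCL slopes `σ_j = 2θ·minmod(ρ_j − ρ_{j−1}, (ρ_{j+1} − ρ_{j−1})/2, ρ_{j+1} − ρ_j)`. -/
def slp (θ : ℝ) (ρ : ℤ → ℝ) (j : ℤ) : ℝ :=
  2 * θ * minmod3 (ρ j - ρ (j - 1)) ((ρ (j + 1) - ρ (j - 1)) / 2) (ρ (j + 1) - ρ j)

/-- left interface value `ρ⁻_{j+1/2} = ρ_j + σ_j/2`. -/
def intL (θ : ℝ) (ρ : ℤ → ℝ) (j : ℤ) : ℝ := ρ j + slp θ ρ j / 2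

/-- right interface value `ρ⁺_{j−1/2} = ρ_j − σ_j/2`. -/
def intR (θ : ℝ) (ρ : ℤ → ℝ) (j : ℤ) : ℝ := ρ j - slp θ ρ j / 2

/-- discrete convolution `A_j = Δx·Σ_l μ((j−l)Δx)·ρ_l`. -/
def Adisc (μ : ℝ → ℝ) (Δx : ℝ) (ρ : ℤ → ℝ) (j : ℤ) : ℝ :=
  Δx * ∑' l : ℤ, μ (((j : ℝ) - (l : ℝ)) * Δx) * ρ l

/-- `s_j = θ·(A_{j+1} − A_{j−1})`. -/
def sdisc (μ : ℝ → ℝ) (θ Δx : ℝ) (ρ : ℤ → ℝ) (j : ℤ) : ℝ :=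
  θ * (Adisc μ Δx ρ (j + 1) - Adisc μ Δx ρ (j - 1))

/-- `A⁻_{j+1/2} = A_j + s_j/2`. -/
def AdiscL (μ : ℝ → ℝ) (θ Δx : ℝ) (ρ : ℤ → ℝ) (j : ℤ) : ℝ :=
  Adisc μ Δx ρ j + sdisc μ θ Δx ρ j / 2

/-- `A⁺_{j−1/2} = A_j − s_j/2`. -/
def AdiscR (μ : ℝ → ℝ) (θ Δx : ℝ) (ρ : ℤ → ℝ) (j : ℤ) : ℝ :=
  Adisc μ Δx ρ j - sdisc μ θ Δx ρ j / 2

/-- mid-time value `ρ^{½,−}_{j+1/2}`. -/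
def midL (f : ℝ → ℝ → ℝ) (μ : ℝ → ℝ) (θ lam Δx : ℝ) (ρ : ℤ → ℝ) (j : ℤ) : ℝ :=
  intL θ ρ j - lam / 2 *
    (f (intL θ ρ j) (AdiscL μ θ Δx ρ j) - f (intR θ ρ j) (AdiscR μ θ Δx ρ j))

/-- mid-time value `ρ^{½,+}_{j−1/2}`. -/
def midR (f : ℝ → ℝ → ℝ) (μ : ℝ → ℝ) (θ lam Δx : ℝ) (ρ : ℤ → ℝ) (j : ℤ) : ℝ :=
  intR θ ρ j - lam / 2 *
    (f (intL θ ρ j) (AdiscL μ θ Δx ρ j) - f (intR θ ρ j) (AdiscR μ θ Δx ρ j))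

/-- mid-time convolution `A^{½}_{j+1/2}`. -/
def Amid (f : ℝ → ℝ → ℝ) (μ : ℝ → ℝ) (θ lam Δx : ℝ) (ρ : ℤ → ℝ) (j : ℤ) : ℝ :=
  Δx / 2 * ∑' l : ℤ,
    (μ (((j : ℝ) + 1 - (l : ℝ)) * Δx) * midR f μ θ lam Δx ρ l +
     μ (((j : ℝ) - (l : ℝ)) * Δx) * midL f μ θ lam Δx ρ l)

/-- Lax–Friedrichs type numerical flux `F(u,v,A)`. -/
def numFlux (f : ℝ → ℝ → ℝ) (α lam u v A : ℝ) : ℝ :=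
  (f u A + f v A) / 2 - α * (v - u) / (2 * lam)

/-- MUSCL–Hancock update `ρ'_j`. -/
def mhUpdate (f : ℝ → ℝ → ℝ) (μ : ℝ → ℝ) (θ α lam Δx : ℝ) (ρ : ℤ → ℝ) (j : ℤ) : ℝ :=
  ρ j - lam *
    (numFlux f α lam (midL f μ θ lam Δx ρ j) (midR f μ θ lam Δx ρ (j + 1))
        (Amid f μ θ lam Δx ρ j) -
     numFlux f α lam (midL f μ θ lam Δx ρ (j - 1)) (midR f μ θ lam Δx ρ j)
        (Amid f μ θ lam Δx ρ (j - 1)))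

lemma taylor2 (μ : ℝ → ℝ) (C : ℝ) (hμ : ContDiff ℝ 2 μ)
    (hC : ∀ x : ℝ, |iteratedDeriv 2 μ x| ≤ C) (x h : ℝ) (hh : 0 ≤ h) :
    |μ (x + h) - 2 * μ x + μ (x - h)| ≤ C * h ^ 2 := by
  have h2 : ContDiff ℝ ((1:ℕ) + 1) μ := by exact_mod_cast hμ
  rw [contDiff_succ_iff_deriv] at h2
  have hd : Differentiable ℝ μ := h2.1
  obtain ⟨hd1, hc2⟩ := contDiff_one_iff_deriv.mp (by exact_mod_cast h2.2.2)
  have hdd : deriv (deriv μ) = iteratedDeriv 2 μ := by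
    rw [iteratedDeriv_succ, iteratedDeriv_one]
  -- Lipschitz bound on deriv μ
  have lip : ∀ a b : ℝ, |deriv μ a - deriv μ b| ≤ C * |a - b| := by
    intro a b
    have := Convex.norm_image_sub_le_of_norm_deriv_le (f := deriv μ) (s := Set.univ)
      (fun y _ => hd1 y) (fun y _ => by rw [hdd]; exact (hC y)) convex_univ
      (Set.mem_univ b) (Set.mem_univ a)
    simpa using this
  set F : ℝ → ℝ := fun t => μ (x + t) + μ (x - t) with hF
  have hF' : ∀ t : ℝ, HasDerivAt F (deriv μ (x + t) - deriv μ (x - t)) t := by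
    intro t
    have h1 : HasDerivAt (fun t => μ (x + t)) (deriv μ (x + t)) t := by
      simpa [Function.comp_def] using ((hd (x + t)).hasDerivAt.comp t ((hasDerivAt_id t).const_add x))
    have hneg : HasDerivAt (fun t : ℝ => x - t) (-1) t := by
      simpa using ((hasDerivAt_id t).const_sub x)
    have h2' : HasDerivAt (fun t => μ (x - t)) (deriv μ (x - t) * (-1)) t :=
      (hd (x - t)).hasDerivAt.comp t hneg
    have := h1.add h2'
    simpa [mul_comm, sub_eq_add_neg, hF, Pi.add_def] using this
  have hFc : Continuous fun t => deriv μ (x + t) - deriv μ (x - t) := by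
    have := hd1.continuous
    fun_prop
  have key : F h - F 0 = ∫ t in (0:ℝ)..h, (deriv μ (x + t) - deriv μ (x - t)) :=
    (intervalIntegral.integral_eq_sub_of_hasDerivAt (fun t _ => hF' t)
      (hFc.intervalIntegrable 0 h)).symm
  have hbound : ∀ t ∈ Set.uIoc (0:ℝ) h, ‖deriv μ (x + t) - deriv μ (x - t)‖ ≤ C * (2 * t) := by
    intro t ht
    rw [Set.uIoc_of_le hh] at ht
    have := lip (x + t) (x - t)
    have e : |x + t - (x - t)| = 2 * t := by
      rw [abs_of_nonneg (by linarith [ht.1.le])]; ring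
    calc ‖deriv μ (x + t) - deriv μ (x - t)‖ ≤ C * |x + t - (x - t)| := this
      _ = C * (2 * t) := by rw [e]
  have hC0 : 0 ≤ C := le_trans (abs_nonneg _) (hC 0)
  have hint : |∫ t in (0:ℝ)..h, (deriv μ (x + t) - deriv μ (x - t))| ≤
      |∫ t in (0:ℝ)..h, C * (2 * t)| :=
    intervalIntegral.norm_integral_le_abs_of_norm_le
      ((MeasureTheory.ae_restrict_iff' measurableSet_uIoc).2
        (Filter.Eventually.of_forall hbound))
      ((continuous_const.mul (continuous_const.mul continuous_id)).intervalIntegrable 0 h)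
  have hval : |∫ t in (0:ℝ)..h, C * (2 * t)| = C * h ^ 2 := by
    rw [intervalIntegral.integral_const_mul, intervalIntegral.integral_const_mul, integral_id]
    rw [abs_of_nonneg (by nlinarith [sq_nonneg h])]
    ring
  have e2 : μ (x + h) - 2 * μ x + μ (x - h) = F h - F 0 := by simp [hF]; ring
  rw [e2, key]
  rw [hval] at hint
  exact hint

lemma Abound (μ : ℝ → ℝ) (Δx Cμ'' : ℝ) (hΔx : 0 < Δx)
    (hμ : ContDiff ℝ 2 μ) (hμc : HasCompactSupport μ)
    (hCμ'' : ∀ x : ℝ, |iteratedDeriv 2 μ x| ≤ Cμ'')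
    (ρ : ℤ → ℝ) (hρ : ∀ j : ℤ, 0 ≤ ρ j) (hsum : Summable ρ) (j : ℤ) :
    |Adisc μ Δx ρ (j + 1) - 2 * Adisc μ Δx ρ j + Adisc μ Δx ρ (j - 1)| ≤
      Δx ^ 2 * Cμ'' * (Δx * ∑' l : ℤ, ρ l) := by
  have hC0 : 0 ≤ Cμ'' := le_trans (abs_nonneg _) (hCμ'' 0)
  obtain ⟨B, hB⟩ := hμc.exists_bound_of_continuous hμ.continuous
  have hsμ : ∀ c : ℤ → ℝ, Summable (fun l => μ (c l) * ρ l) := by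
    intro c
    apply Summable.of_norm_bounded (hsum.mul_left B)
    intro l
    rw [norm_mul]
    calc ‖μ (c l)‖ * ‖ρ l‖ ≤ B * ‖ρ l‖ :=
          mul_le_mul_of_nonneg_right (hB (c l)) (norm_nonneg _)
      _ = B * ρ l := by rw [Real.norm_eq_abs, abs_of_nonneg (hρ l)]
  set x : ℤ → ℝ := fun l => ((j : ℝ) - (l : ℝ)) * Δx with hx
  have h1 : Summable (fun l => μ (x l + Δx) * ρ l) := hsμ _
  have h2 : Summable (fun l => μ (x l) * ρ l) := hsμ _
  have h3 : Summable (fun l => μ (x l - Δx) * ρ l) := hsμ _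
  have e1 : ∀ l : ℤ, (((j + 1 : ℤ) : ℝ) - (l : ℝ)) * Δx = x l + Δx := by
    intro l; simp only [hx]; push_cast; ring
  have e3 : ∀ l : ℤ, (((j - 1 : ℤ) : ℝ) - (l : ℝ)) * Δx = x l - Δx := by
    intro l; simp only [hx]; push_cast; ring
  have E1 : Adisc μ Δx ρ (j + 1) = Δx * ∑' l : ℤ, μ (x l + Δx) * ρ l := by
    unfold Adisc
    exact congrArg (Δx * ·) (tsum_congr fun l => by rw [e1 l])
  have E3 : Adisc μ Δx ρ (j - 1) = Δx * ∑' l : ℤ, μ (x l - Δx) * ρ l := by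
    unfold Adisc
    exact congrArg (Δx * ·) (tsum_congr fun l => by rw [e3 l])
  have eq1 : Adisc μ Δx ρ (j + 1) - 2 * Adisc μ Δx ρ j + Adisc μ Δx ρ (j - 1) =
      Δx * ∑' l : ℤ, (μ (x l + Δx) - 2 * μ (x l) + μ (x l - Δx)) * ρ l := by
    rw [E1, E3]
    show _ - 2 * (Δx * ∑' l : ℤ, μ (x l) * ρ l) + _ = _
    have : ∑' l : ℤ, (μ (x l + Δx) - 2 * μ (x l) + μ (x l - Δx)) * ρ l =
        (∑' l, μ (x l + Δx) * ρ l) - 2 * (∑' l, μ (x l) * ρ l) +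
          (∑' l, μ (x l - Δx) * ρ l) := by
      rw [← tsum_mul_left, ← Summable.tsum_sub h1 (h2.mul_left 2), ← Summable.tsum_add (h1.sub (h2.mul_left 2)) h3]
      exact tsum_congr fun l => by ring
    rw [this]; ring
  rw [eq1, abs_mul, abs_of_nonneg hΔx.le]
  have hg : ∀ l : ℤ, |(μ (x l + Δx) - 2 * μ (x l) + μ (x l - Δx)) * ρ l| ≤
      Cμ'' * Δx ^ 2 * ρ l := by
    intro l
    rw [abs_mul, abs_of_nonneg (hρ l)]
    exact mul_le_mul_of_nonneg_right (taylor2 μ Cμ'' hμ hCμ'' (x l) Δx hΔx.le) (hρ l)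
  have hgs : Summable (fun l : ℤ => (μ (x l + Δx) - 2 * μ (x l) + μ (x l - Δx)) * ρ l) := by
    apply ((h1.sub (h2.mul_left 2)).add h3).congr
    intro l; ring
  have habs : |∑' l : ℤ, (μ (x l + Δx) - 2 * μ (x l) + μ (x l - Δx)) * ρ l| ≤
      Cμ'' * Δx ^ 2 * ∑' l : ℤ, ρ l := by
    calc |∑' l : ℤ, (μ (x l + Δx) - 2 * μ (x l) + μ (x l - Δx)) * ρ l|
        = ‖∑' l : ℤ, (μ (x l + Δx) - 2 * μ (x l) + μ (x l - Δx)) * ρ l‖ :=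
          (Real.norm_eq_abs _).symm
      _ ≤ ∑' l : ℤ, ‖(μ (x l + Δx) - 2 * μ (x l) + μ (x l - Δx)) * ρ l‖ :=
          norm_tsum_le_tsum_norm hgs.norm
      _ ≤ ∑' l : ℤ, Cμ'' * Δx ^ 2 * ρ l :=
          Summable.tsum_le_tsum (fun l => by rw [Real.norm_eq_abs]; exact hg l) hgs.norm
            (hsum.mul_left _)
      _ = Cμ'' * Δx ^ 2 * ∑' l : ℤ, ρ l := tsum_mul_left
  calc Δx * |∑' l : ℤ, (μ (x l + Δx) - 2 * μ (x l) + μ (x l - Δx)) * ρ l|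
      ≤ Δx * (Cμ'' * Δx ^ 2 * ∑' l : ℤ, ρ l) :=
        mul_le_mul_of_nonneg_left habs hΔx.le
    _ = Δx ^ 2 * Cμ'' * (Δx * ∑' l : ℤ, ρ l) := by ring

/-- second-difference bounds on the discrete convolutions. -/
theorem stmt16 (μ : ℝ → ℝ) (Δx θ Cμ'' : ℝ)
    (hΔx : 0 < Δx) (hθ0 : 0 ≤ θ) (hθ1 : θ ≤ 1 / 2)
    (hμ : ContDiff ℝ 2 μ) (hμc : HasCompactSupport μ)
    (hCμ'' : ∀ x : ℝ, |iteratedDeriv 2 μ x| ≤ Cμ'')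
    (ρ : ℤ → ℝ) (hρ : ∀ j : ℤ, 0 ≤ ρ j) (hsum : Summable ρ) (j : ℤ) :
    |Adisc μ Δx ρ (j + 1) - 2 * Adisc μ Δx ρ j + Adisc μ Δx ρ (j - 1)| ≤
      Δx ^ 2 * Cμ'' * (Δx * ∑' l : ℤ, ρ l) ∧
    |sdisc μ θ Δx ρ (j + 1) - 2 * sdisc μ θ Δx ρ j + sdisc μ θ Δx ρ (j - 1)| ≤
      2 * θ * Δx ^ 2 * Cμ'' * (Δx * ∑' l : ℤ, ρ l) ∧
    |AdiscL μ θ Δx ρ (j + 1) - 2 * AdiscL μ θ Δx ρ j + AdiscL μ θ Δx ρ (j - 1)| ≤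
      (1 + θ) * Δx ^ 2 * Cμ'' * (Δx * ∑' l : ℤ, ρ l) := by
  have hA : ∀ k : ℤ, |Adisc μ Δx ρ (k + 1) - 2 * Adisc μ Δx ρ k + Adisc μ Δx ρ (k - 1)| ≤
      Δx ^ 2 * Cμ'' * (Δx * ∑' l : ℤ, ρ l) :=
    fun k => Abound μ Δx Cμ'' hΔx hμ hμc hCμ'' ρ hρ hsum k
  have i1 : j + 1 - 1 = j := by ring
  have i2 : j - 1 + 1 = j := by ring
  set X := Adisc μ Δx ρ (j + 1 + 1) - 2 * Adisc μ Δx ρ (j + 1) + Adisc μ Δx ρ (j + 1 - 1) with hX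
  set Y := Adisc μ Δx ρ (j - 1 + 1) - 2 * Adisc μ Δx ρ (j - 1) + Adisc μ Δx ρ (j - 1 - 1) with hY
  have hXb : |X| ≤ Δx ^ 2 * Cμ'' * (Δx * ∑' l : ℤ, ρ l) := hA (j + 1)
  have hYb : |Y| ≤ Δx ^ 2 * Cμ'' * (Δx * ∑' l : ℤ, ρ l) := hA (j - 1)
  have exp2 : sdisc μ θ Δx ρ (j + 1) - 2 * sdisc μ θ Δx ρ j + sdisc μ θ Δx ρ (j - 1) =
      θ * (X - Y) := by
    simp only [sdisc, hX, hY, i1, i2]; ring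
  have hs2 : |sdisc μ θ Δx ρ (j + 1) - 2 * sdisc μ θ Δx ρ j + sdisc μ θ Δx ρ (j - 1)| ≤
      2 * θ * Δx ^ 2 * Cμ'' * (Δx * ∑' l : ℤ, ρ l) := by
    rw [exp2, abs_mul, abs_of_nonneg hθ0]
    have hxy : |X - Y| ≤ |X| + |Y| := by
      simpa [sub_eq_add_neg, abs_neg] using abs_add_le X (-Y)
    calc θ * |X - Y| ≤ θ * (|X| + |Y|) := mul_le_mul_of_nonneg_left hxy hθ0
      _ ≤ θ * (Δx ^ 2 * Cμ'' * (Δx * ∑' l : ℤ, ρ l) +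
            Δx ^ 2 * Cμ'' * (Δx * ∑' l : ℤ, ρ l)) :=
          mul_le_mul_of_nonneg_left (add_le_add hXb hYb) hθ0
      _ = 2 * θ * Δx ^ 2 * Cμ'' * (Δx * ∑' l : ℤ, ρ l) := by ring
  refine ⟨hA j, hs2, ?_⟩
  have exp3 : AdiscL μ θ Δx ρ (j + 1) - 2 * AdiscL μ θ Δx ρ j + AdiscL μ θ Δx ρ (j - 1) =
      (Adisc μ Δx ρ (j + 1) - 2 * Adisc μ Δx ρ j + Adisc μ Δx ρ (j - 1)) +
      (sdisc μ θ Δx ρ (j + 1) - 2 * sdisc μ θ Δx ρ j + sdisc μ θ Δx ρ (j - 1)) / 2 := by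
    simp only [AdiscL]; ring
  rw [exp3]
  have h1 := hA j
  calc |(Adisc μ Δx ρ (j + 1) - 2 * Adisc μ Δx ρ j + Adisc μ Δx ρ (j - 1)) +
      (sdisc μ θ Δx ρ (j + 1) - 2 * sdisc μ θ Δx ρ j + sdisc μ θ Δx ρ (j - 1)) / 2|
      ≤ |Adisc μ Δx ρ (j + 1) - 2 * Adisc μ Δx ρ j + Adisc μ Δx ρ (j - 1)| +
        |sdisc μ θ Δx ρ (j + 1) - 2 * sdisc μ θ Δx ρ j + sdisc μ θ Δx ρ (j - 1)| / 2 := by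
        refine (abs_add_le _ _).trans ?_
        rw [abs_div]
        simp
    _ ≤ (1 + θ) * Δx ^ 2 * Cμ'' * (Δx * ∑' l : ℤ, ρ l) := by linarith
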